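/- Let S be an additively reduced, additively Furstenberg semidomain with A₊(S) = S^×, and G a torsion-free abelian group. Every trinomial f = s_0 x^{g_0} + s_1 x^{g_1} + s_2 x^{g_2} ∈ S[G] (distinct exponents, nonzero coefficients) in which the middle coefficient s_1 (for g_0 > g_1 > g_2) is a unit of S is irreducible in S[G]. -/

import Mathlib

/-- Witness that `S` is a semidomain: an injective semiring hom into an integral domain. -/
structure SemidomainWitness (S : Type*) [CommSemiring S] where
  D : Type
  [commRing : CommRing D]
  [isDomain : IsDomain D]
  emb : S →+* D
  inj : Function.Injective emb

/-- `S` is a semidomain, i.e. (isomorphic to) a subsemiring of an integral domain. -/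
def IsSemidomain (S : Type*) [CommSemiring S] : Prop := Nonempty (SemidomainWitness S)

/-- `S` is additively reduced: `0` is the only additively invertible element. -/
def AddReduced (S : Type*) [AddZeroClass S] : Prop := ∀ a b : S, a + b = 0 → a = 0

/-- `s` is an atom of the additive monoid `(S, +)` (for `S` additively reduced):
it is nonzero and cannot be written as a sum of two nonzero elements. -/
def IsAddAtom {S : Type*} [AddZeroClass S] (s : S) : Prop :=
  s ≠ 0 ∧ ∀ a b : S, s = a + b → a = 0 ∨ b = 0

/-- `S` is additively Furstenberg: every nonzero element is divisible in `(S, +)`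
by an additive atom. -/
def AddFurstenberg (S : Type*) [AddZeroClass S] : Prop :=
  ∀ s : S, s ≠ 0 → ∃ a t : S, IsAddAtom a ∧ s = a + t


section GroupAlg
variable {S : Type*} [CommSemiring S] {G : Type*} [AddCommGroup G]

/-- A monomial `s·x^g` in the group semidomain `S[G]`. -/
def IsMonomial (f : AddMonoidAlgebra S G) : Prop :=
  ∃ (g : G) (s : S), f = AddMonoidAlgebra.single g s

/-- `f` is monolithic: every factorization of `f` in `S[G]` has a monomial factor. -/
def Monolithic (f : AddMonoidAlgebra S G) : Prop :=
  f ≠ 0 ∧ ∀ p q : AddMonoidAlgebra S G, f = p * q → IsMonomial p ∨ IsMonomial q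

end GroupAlg

section MyAux

theorem myAux_sum_eq_zero {S ι : Type*} [AddCommMonoid S] (hred : AddReduced S)
    {t : Finset ι} {f : ι → S} (h : ∑ i ∈ t, f i = 0) : ∀ i ∈ t, f i = 0 := by
  classical
  induction t using Finset.induction_on with
  | empty => intro i hi; exact absurd hi (Finset.notMem_empty i)
  | @insert a s hx ih =>
    rw [Finset.sum_insert hx] at h
    have ha : f a = 0 := hred _ _ h
    have hs : ∑ i ∈ s, f i = 0 := hred _ _ (by rwa [add_comm] at h)
    intro i hi
    rcases Finset.mem_insert.mp hi with rfl | hi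
    · exact ha
    · exact ih hs i hi

theorem myAux_atom_two {S ι : Type*} [AddCommMonoid S] [DecidableEq ι] (hred : AddReduced S)
    {s : S} (hs : IsAddAtom s) {t : Finset ι} {f : ι → S} (h : s = ∑ i ∈ t, f i)
    {i j : ι} (hi : i ∈ t) (hj : j ∈ t) (hij : i ≠ j) : f i = 0 ∨ f j = 0 := by
  rw [← Finset.add_sum_erase t f hi] at h
  rcases hs.2 _ _ h with h0 | h0
  · exact Or.inl h0
  · exact Or.inr (myAux_sum_eq_zero hred h0 j (Finset.mem_erase.mpr ⟨hij.symm, hj⟩))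

end MyAux

/-- A trinomial in `S[G]` whose middle coefficient (w.r.t. `g₀ > g₁ > g₂`) is a unit is
irreducible, when `S` is additively reduced, additively Furstenberg and `A₊(S) = S^×`. -/
theorem trinomial_irreducible_of_middle_unit
    {S : Type*} [CommSemiring S] {G : Type*} [AddCommGroup G] [LinearOrder G] [IsOrderedAddMonoid G]
    (hS : IsSemidomain S) (hred : AddReduced S) (hfur : AddFurstenberg S)
    (hatoms : ∀ a : S, IsAddAtom a ↔ IsUnit a)
    (s₀ s₁ s₂ : S) (g₀ g₁ g₂ : G)
    (hs₀ : s₀ ≠ 0) (hs₁ : s₁ ≠ 0) (hs₂ : s₂ ≠ 0)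
    (h01 : g₁ < g₀) (h12 : g₂ < g₁) (hu : IsUnit s₁)
    (f : AddMonoidAlgebra S G)
    (hf : f = AddMonoidAlgebra.single g₀ s₀ + AddMonoidAlgebra.single g₁ s₁ +
        AddMonoidAlgebra.single g₂ s₂) :
    Irreducible f := by
  classical
  obtain ⟨W⟩ := hS
  letI : CommRing W.D := W.commRing
  letI : IsDomain W.D := W.isDomain
  haveI : Nontrivial S := ⟨s₀, 0, hs₀⟩
  have hnz : ∀ a b : S, a ≠ 0 → b ≠ 0 → a * b ≠ 0 := by
    intro a b ha hb hab
    have h2 : W.emb a * W.emb b = 0 := by rw [← map_mul, hab, map_zero]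
    rcases mul_eq_zero.mp h2 with h | h
    · exact ha (W.inj (by rw [h, map_zero]))
    · exact hb (W.inj (by rw [h, map_zero]))
  have h02 : g₂ < g₀ := h12.trans h01
  have fapp : ∀ c : G, f.coeff c =
      (if g₀ = c then s₀ else 0) + (if g₁ = c then s₁ else 0) + (if g₂ = c then s₂ else 0) := by
    intro c
    rw [hf]
    rw [AddMonoidAlgebra.coeff_add, AddMonoidAlgebra.coeff_add, Finsupp.add_apply, Finsupp.add_apply,
      AddMonoidAlgebra.coeff_single_apply,
      AddMonoidAlgebra.coeff_single_apply, AddMonoidAlgebra.coeff_single_apply]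
  have f0 : f.coeff g₀ = s₀ := by
    rw [fapp g₀, if_pos rfl, if_neg h01.ne, if_neg h02.ne, add_zero, add_zero]
  have f1 : f.coeff g₁ = s₁ := by
    rw [fapp g₁, if_pos rfl, if_neg h01.ne', if_neg h12.ne, zero_add, add_zero]
  have f2 : f.coeff g₂ = s₂ := by
    rw [fapp g₂, if_pos rfl, if_neg h02.ne', if_neg h12.ne', zero_add, zero_add]
  have fother : ∀ c : G, c ≠ g₀ → c ≠ g₁ → c ≠ g₂ → f.coeff c = 0 := by
    intro c h0 h1 h2
    rw [fapp c, if_neg (fun h => h0 h.symm), if_neg (fun h => h1 h.symm),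
      if_neg (fun h => h2 h.symm), add_zero, add_zero]
  have hfne : f ≠ 0 := by
    intro h
    exact hs₀ (by rw [← f0, h, AddMonoidAlgebra.coeff_zero, Finsupp.coe_zero, Pi.zero_apply])
  have hmul_ne : ∀ p q : AddMonoidAlgebra S G, ∀ a ∈ p.coeff.support, ∀ b ∈ q.coeff.support,
      (p * q).coeff (a + b) ≠ 0 := by
    intro p q a ha b hb h
    rw [AddMonoidAlgebra.coeff_mul] at h
    simp only [Finsupp.sum] at h
    have h1 := myAux_sum_eq_zero hred h a ha
    have h2 := myAux_sum_eq_zero hred h1 b hb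
    rw [if_pos rfl] at h2
    exact hnz _ _ (Finsupp.mem_support_iff.mp ha) (Finsupp.mem_support_iff.mp hb) h2
  -- a monomial factor must be a unit
  have hmono_unit : ∀ p q : AddMonoidAlgebra S G, f = p * q → IsMonomial p → IsUnit p := by
    rintro p q hpq ⟨a, s, rfl⟩
    have hs : s ≠ 0 := by
      rintro rfl
      rw [AddMonoidAlgebra.single_eq_zero.mpr rfl, zero_mul] at hpq
      exact hfne hpq
    have key : s * q.coeff (-a + g₁) = s₁ := by
      rw [← AddMonoidAlgebra.coeff_single_mul_apply, ← hpq, f1]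
    have hsu : IsUnit s := isUnit_of_mul_isUnit_left (key ▸ hu)
    obtain ⟨u, rfl⟩ := hsu
    refine ⟨⟨AddMonoidAlgebra.single a u, AddMonoidAlgebra.single (-a) ((u⁻¹ : Sˣ) : S), ?_, ?_⟩, rfl⟩
    · rw [AddMonoidAlgebra.single_mul_single, add_neg_cancel, Units.mul_inv,
        AddMonoidAlgebra.one_def]
    · rw [AddMonoidAlgebra.single_mul_single, neg_add_cancel, Units.inv_mul,
        AddMonoidAlgebra.one_def]
  constructor
  · -- f is not a unit
    intro hU
    obtain ⟨v, hv⟩ := hU.exists_right_inv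
    have hv0 : v ≠ 0 := by
      rintro rfl
      rw [mul_zero] at hv
      exact one_ne_zero hv.symm
    obtain ⟨b, hb⟩ := Finsupp.support_nonempty_iff.mpr (AddMonoidAlgebra.coeff_eq_zero.not.mpr hv0)
    have hg0 : g₀ ∈ f.coeff.support := Finsupp.mem_support_iff.mpr (f0 ▸ hs₀)
    have hg2 : g₂ ∈ f.coeff.support := Finsupp.mem_support_iff.mpr (f2 ▸ hs₂)
    have e0 : g₀ + b = 0 := by
      have h := hmul_ne f v g₀ hg0 b hb
      rw [hv] at h
      by_contra hne
      exact h (by rw [AddMonoidAlgebra.one_def, AddMonoidAlgebra.coeff_single_apply,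
        if_neg (fun h' => hne h'.symm)])
    have e2 : g₂ + b = 0 := by
      have h := hmul_ne f v g₂ hg2 b hb
      rw [hv] at h
      by_contra hne
      exact h (by rw [AddMonoidAlgebra.one_def, AddMonoidAlgebra.coeff_single_apply,
        if_neg (fun h' => hne h'.symm)])
    have : g₀ = g₂ := by
      have := e0.trans e2.symm
      exact add_right_cancel this
    exact absurd this h02.ne'
  · -- every factorization has a unit factor
    intro p q hpq
    by_cases hp : IsMonomial p
    · exact Or.inl (hmono_unit p q hpq hp)
    by_cases hq : IsMonomial q
    · exact Or.inr (hmono_unit q p (by rw [hpq, mul_comm]) hq)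
    exfalso
    have hp0 : p ≠ 0 := by rintro rfl; rw [zero_mul] at hpq; exact hfne hpq
    have hq0 : q ≠ 0 := by rintro rfl; rw [mul_zero] at hpq; exact hfne hpq
    have hA : p.coeff.support.Nonempty := Finsupp.support_nonempty_iff.mpr (AddMonoidAlgebra.coeff_eq_zero.not.mpr hp0)
    have hB : q.coeff.support.Nonempty := Finsupp.support_nonempty_iff.mpr (AddMonoidAlgebra.coeff_eq_zero.not.mpr hq0)
    have hAcard : 1 < p.coeff.support.card := by
      rcases Nat.lt_or_ge 1 p.coeff.support.card with h | h
      · exact h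
      interval_cases h' : p.coeff.support.card
      · exact absurd (Finset.card_eq_zero.mp h') (Finset.nonempty_iff_ne_empty.mp hA)
      · obtain ⟨a, b, hb, hpe⟩ := Finsupp.card_support_eq_one'.mp h'
        exact absurd ⟨a, b, AddMonoidAlgebra.coeff_injective (by rw [hpe, AddMonoidAlgebra.coeff_single])⟩ hp
    have hBcard : 1 < q.coeff.support.card := by
      rcases Nat.lt_or_ge 1 q.coeff.support.card with h | h
      · exact h
      interval_cases h' : q.coeff.support.card
      · exact absurd (Finset.card_eq_zero.mp h') (Finset.nonempty_iff_ne_empty.mp hB)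
      · obtain ⟨a, b, hb, hqe⟩ := Finsupp.card_support_eq_one'.mp h'
        exact absurd ⟨a, b, AddMonoidAlgebra.coeff_injective (by rw [hqe, AddMonoidAlgebra.coeff_single])⟩ hq
    set a0 := p.coeff.support.max' hA with ha0
    set a2 := p.coeff.support.min' hA with ha2
    set b0 := q.coeff.support.max' hB with hb0
    set b2 := q.coeff.support.min' hB with hb2
    have haa : a2 < a0 := Finset.min'_lt_max'_of_card _ hAcard
    have hbb : b2 < b0 := Finset.min'_lt_max'_of_card _ hBcard
    have hmem : ∀ c : G, (p * q).coeff c ≠ 0 → c = g₀ ∨ c = g₁ ∨ c = g₂ := by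
      intro c hc
      by_contra h
      push_neg at h
      exact hc (by rw [← hpq]; exact fother c h.1 h.2.1 h.2.2)
    have hub : ∀ c : G, (p * q).coeff c ≠ 0 → a2 + b2 ≤ c ∧ c ≤ a0 + b0 := by
      intro c hc
      have hcs : c ∈ (p * q).coeff.support := Finsupp.mem_support_iff.mpr hc
      have := AddMonoidAlgebra.support_coeff_mul_subset p q hcs
      rw [Finset.mem_add] at this
      obtain ⟨x, hx, y, hy, rfl⟩ := this
      exact ⟨add_le_add (Finset.min'_le _ _ hx) (Finset.min'_le _ _ hy),
        add_le_add (Finset.le_max' _ _ hx) (Finset.le_max' _ _ hy)⟩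
    have hfpq : ∀ c : G, (p * q).coeff c = f.coeff c := fun c => by rw [← hpq]
    have htop : a0 + b0 = g₀ := by
      have h1 : (p * q).coeff (a0 + b0) ≠ 0 :=
        hmul_ne p q a0 (Finset.max'_mem _ _) b0 (Finset.max'_mem _ _)
      have h2 : g₀ ≤ a0 + b0 := (hub g₀ (by rw [hfpq, f0]; exact hs₀)).2
      rcases hmem _ h1 with h | h | h
      · exact h
      · exact absurd (h ▸ h2) (not_le.mpr h01)
      · exact absurd (h ▸ h2) (not_le.mpr h02)
    have hbot : a2 + b2 = g₂ := by
      have h1 : (p * q).coeff (a2 + b2) ≠ 0 :=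
        hmul_ne p q a2 (Finset.min'_mem _ _) b2 (Finset.min'_mem _ _)
      have h2 : a2 + b2 ≤ g₂ := (hub g₂ (by rw [hfpq, f2]; exact hs₂)).1
      rcases hmem _ h1 with h | h | h
      · exact absurd (h ▸ h2) (not_le.mpr h02)
      · exact absurd (h ▸ h2) (not_le.mpr h12)
      · exact h
    have hmid1 : a0 + b2 = g₁ := by
      have h1 : (p * q).coeff (a0 + b2) ≠ 0 :=
        hmul_ne p q a0 (Finset.max'_mem _ _) b2 (Finset.min'_mem _ _)
      have hlt : a0 + b2 < g₀ := htop ▸ add_lt_add_right hbb a0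
      have hgt : g₂ < a0 + b2 := hbot ▸ add_lt_add_left haa b2
      rcases hmem _ h1 with h | h | h
      · exact absurd (h ▸ hlt) (lt_irrefl _)
      · exact h
      · exact absurd (h ▸ hgt) (lt_irrefl _)
    have hmid2 : a2 + b0 = g₁ := by
      have h1 : (p * q).coeff (a2 + b0) ≠ 0 :=
        hmul_ne p q a2 (Finset.min'_mem _ _) b0 (Finset.max'_mem _ _)
      have hlt : a2 + b0 < g₀ := htop ▸ add_lt_add_left haa b0
      have hgt : g₂ < a2 + b0 := hbot ▸ add_lt_add_right hbb a2
      rcases hmem _ h1 with h | h | h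
      · exact absurd (h ▸ hlt) (lt_irrefl _)
      · exact h
      · exact absurd (h ▸ hgt) (lt_irrefl _)
    -- now the middle coefficient is a sum of two nonzero terms, contradicting atomicity
    have hsum : s₁ = ∑ x ∈ p.coeff.support ×ˢ q.coeff.support,
        (if x.1 + x.2 = g₁ then p.coeff x.1 * q.coeff x.2 else 0) := by
      rw [← f1, ← hfpq, AddMonoidAlgebra.coeff_mul]
      simp only [Finsupp.sum]
      rw [Finset.sum_product]
    have hatom : IsAddAtom s₁ := (hatoms s₁).mpr hu
    have hpair := myAux_atom_two hred hatom hsum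
      (i := (a0, b2)) (j := (a2, b0))
      (Finset.mem_product.mpr ⟨Finset.max'_mem _ hA, Finset.min'_mem _ hB⟩)
      (Finset.mem_product.mpr ⟨Finset.min'_mem _ hA, Finset.max'_mem _ hB⟩)
      (fun h => haa.ne' (congrArg Prod.fst h))
    have hpa0 : p.coeff a0 ≠ 0 := Finsupp.mem_support_iff.mp (Finset.max'_mem _ _)
    have hpa2 : p.coeff a2 ≠ 0 := Finsupp.mem_support_iff.mp (Finset.min'_mem _ _)
    have hqb0 : q.coeff b0 ≠ 0 := Finsupp.mem_support_iff.mp (Finset.max'_mem _ _)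
    have hqb2 : q.coeff b2 ≠ 0 := Finsupp.mem_support_iff.mp (Finset.min'_mem _ _)
    rcases hpair with h | h
    · rw [if_pos hmid1] at h
      exact hnz _ _ hpa0 hqb2 h
    · rw [if_pos hmid2] at h
      exact hnz _ _ hpa2 hqb0 h
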